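/- Let a > 0, C₀ ≥ 0 and b ∈ ℝ. There exists ε₀ > 0 (depending only on a and C₀) such that: for every pair of continuously differentiable functions ρ : [0, ∞) → ℝ and γ : [0, ∞) → ℝ with ρ(t) > 0 for all t ≥ 0, ρ(0) ≤ ε₀, |ρ'(t) + a·ρ(t)³| ≤ C₀·ρ(t)⁴ for all t ≥ 0, and |γ'(t) − b·ρ(t)²| ≤ C₀·ρ(t)³ for all t ≥ 0, there exist constants C* ∈ ℝ and C₁ > 0 such that |γ(t) − (b/(2a))·log t − C*| ≤ C₁/√t for all t ≥ 1. -/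

import Mathlib

open Real

private lemma mono_aux {c : ℝ} {f f' : ℝ → ℝ}
    (hf : ∀ t ∈ Set.Ici c, HasDerivWithinAt f (f' t) (Set.Ici c) t)
    (h0 : ∀ t ∈ Set.Ici c, 0 ≤ f' t) : MonotoneOn f (Set.Ici c) := by
  apply monotoneOn_of_deriv_nonneg (convex_Ici c)
  · exact fun t ht => (hf t ht).continuousWithinAt
  · intro t ht
    rw [interior_Ici, Set.mem_Ioi] at ht
    exact (((hf t (Set.mem_Ici.2 ht.le)).hasDerivAt (Ici_mem_nhds ht)).differentiableAt).differentiableWithinAt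
  · intro t ht
    rw [interior_Ici, Set.mem_Ioi] at ht
    rw [((hf t (Set.mem_Ici.2 ht.le)).hasDerivAt (Ici_mem_nhds ht)).deriv]
    exact h0 t (Set.mem_Ici.2 ht.le)

private lemma anti_aux {c : ℝ} {f f' : ℝ → ℝ}
    (hf : ∀ t ∈ Set.Ici c, HasDerivWithinAt f (f' t) (Set.Ici c) t)
    (h0 : ∀ t ∈ Set.Ici c, f' t ≤ 0) : AntitoneOn f (Set.Ici c) := by
  have h := mono_aux (f := fun t => -f t) (f' := fun t => -f' t)
    (fun t ht => (hf t ht).neg) (fun t ht => neg_nonneg.2 (h0 t ht))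
  intro x hx y hy hxy
  simpa using h hx hy hxy

/-- Phase asymptotics: if ρ > 0 is C¹ on [0,∞) with ρ(0) small,
    |ρ' + a·ρ³| ≤ C₀·ρ⁴ and |γ' − b·ρ²| ≤ C₀·ρ³, then
    γ(t) = (b/(2a))·log t + C* + O(1/√t) as t → ∞. -/
theorem stmt_17 (a C₀ b : ℝ) (ha : 0 < a) (hC₀ : 0 ≤ C₀) :
    ∃ ε₀ : ℝ, 0 < ε₀ ∧
      ∀ ρ ρ' γ γ' : ℝ → ℝ,
        ContinuousOn ρ' (Set.Ici (0:ℝ)) →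
        (∀ t ∈ Set.Ici (0:ℝ), HasDerivWithinAt ρ (ρ' t) (Set.Ici (0:ℝ)) t) →
        ContinuousOn γ' (Set.Ici (0:ℝ)) →
        (∀ t ∈ Set.Ici (0:ℝ), HasDerivWithinAt γ (γ' t) (Set.Ici (0:ℝ)) t) →
        (∀ t : ℝ, 0 ≤ t → 0 < ρ t) →
        ρ 0 ≤ ε₀ →
        (∀ t : ℝ, 0 ≤ t → |ρ' t + a * ρ t ^ 3| ≤ C₀ * ρ t ^ 4) →
        (∀ t : ℝ, 0 ≤ t → |γ' t - b * ρ t ^ 2| ≤ C₀ * ρ t ^ 3) →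
        ∃ Cstar C₁ : ℝ, 0 < C₁ ∧
          ∀ t : ℝ, 1 ≤ t →
            |γ t - b / (2 * a) * Real.log t - Cstar| ≤ C₁ / Real.sqrt t := by
  refine ⟨a / (2*C₀+2), by positivity, ?_⟩
  intro ρ ρ' γ γ' hρ'c hρd hγ'c hγd hρpos hρ0 hρest hγest
  set ε₀ := a / (2*C₀+2) with hε₀
  have hε₀pos : 0 < ε₀ := by positivity
  have h2C : (0:ℝ) < 2*C₀+2 := by linarith
  have hCε : C₀ * ε₀ < a := by
    rw [hε₀, ← mul_div_assoc, div_lt_iff₀ h2C]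
    nlinarith [mul_nonneg hC₀ ha.le]
  have hCε2 : 2 * C₀ * ε₀ ≤ a := by
    rw [hε₀, ← mul_div_assoc, div_le_iff₀ h2C]
    nlinarith [mul_nonneg hC₀ ha.le]
  -- Step 1 : ρ ≤ ε₀ everywhere
  have hρle : ∀ t : ℝ, 0 ≤ t → ρ t ≤ ε₀ := by
    intro T hT
    have key := image_le_of_deriv_right_lt_deriv_boundary (f := ρ) (f' := ρ')
      (a := 0) (b := T) (B := fun _ => ε₀) (B' := fun _ => 0)
      (fun x hx => ((hρd x hx.1).continuousWithinAt).mono Set.Icc_subset_Ici_self)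
      (fun x hx => (hρd x hx.1).mono (Set.Ici_subset_Ici.2 hx.1))
      hρ0
      (fun x => hasDerivAt_const x ε₀)
      (by
        intro x hx hbx
        have h1 := (abs_le.1 (hρest x hx.1)).2
        rw [hbx] at h1
        nlinarith [mul_pos (pow_pos hε₀pos 3) (sub_pos.2 hCε)])
    exact key ⟨hT, le_refl T⟩
  -- Step 2 : u = ρ⁻², derivative and bound
  set u : ℝ → ℝ := fun t => (ρ t ^ 2)⁻¹ with hu
  set u' : ℝ → ℝ := fun t => -(2 * ρ t * ρ' t) / (ρ t ^ 2) ^ 2 with hu'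
  have hud : ∀ t ∈ Set.Ici (0:ℝ), HasDerivWithinAt u (u' t) (Set.Ici (0:ℝ)) t := by
    intro t ht
    have hne : ρ t ^ 2 ≠ 0 := pow_ne_zero 2 (hρpos t ht).ne'
    have h := ((hρd t ht).pow 2).inv hne
    convert h using 1
    all_goals first | rfl | simp [hu']
  have hub : ∀ t : ℝ, 0 ≤ t → |u' t - 2*a| ≤ 2*C₀*ρ t := by
    intro t ht
    have hr : 0 < ρ t := hρpos t ht
    have heq : u' t - 2*a = (-2) * (ρ' t + a * ρ t ^ 3) / ρ t ^ 3 := by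
      simp only [hu']
      field_simp
      ring
    rw [heq, abs_div, abs_mul, abs_of_pos (pow_pos hr 3), abs_neg, abs_two,
      div_le_iff₀ (pow_pos hr 3)]
    have := hρest t ht
    nlinarith [abs_nonneg (ρ' t + a * ρ t ^ 3)]
  have hupos : ∀ t : ℝ, 0 ≤ t → 0 < u t := fun t ht =>
    inv_pos.2 (pow_pos (hρpos t ht) 2)
  -- u' ≥ a
  have hu'a : ∀ t : ℝ, 0 ≤ t → a ≤ u' t := by
    intro t ht
    have h1 := (abs_le.1 (hub t ht)).1
    have h2 : 2*C₀*ρ t ≤ 2*C₀*ε₀ :=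
      mul_le_mul_of_nonneg_left (hρle t ht) (by linarith)
    linarith
  -- Step 3 : u t ≥ u 0 + a t ⇒ ρ t ≤ (√a √t)⁻¹ for t ≥ 1 (indeed t > 0)
  have hmw : MonotoneOn (fun t => u t - a * t) (Set.Ici (0:ℝ)) := by
    apply mono_aux (f' := fun t => u' t - a)
    · intro t ht
      exact (hud t ht).sub (by simpa using ((hasDerivAt_id t).const_mul a).hasDerivWithinAt)
    · intro t ht
      have := hu'a t ht
      linarith
  have hua : ∀ t : ℝ, 0 ≤ t → a * t < u t := by
    intro t ht
    have := hmw (Set.mem_Ici.2 (le_refl (0:ℝ))) (Set.mem_Ici.2 ht) ht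
    have h0 : 0 < u 0 := hupos 0 le_rfl
    simp only at this
    nlinarith
  have hρsq : ∀ t : ℝ, 0 < t → ρ t ^ 2 < (a * t)⁻¹ := by
    intro t ht
    have h1 : a * t < (ρ t ^ 2)⁻¹ := hua t ht.le
    have h2 : 0 < ρ t ^ 2 := pow_pos (hρpos t ht.le) 2
    have := inv_strictAnti₀ (by positivity : (0:ℝ) < a * t) h1
    rwa [inv_inv] at this
  have hρbd : ∀ t : ℝ, 0 < t → ρ t ≤ (Real.sqrt a * Real.sqrt t)⁻¹ := by
    intro t ht
    have h1 : ρ t ^ 2 ≤ (a * t)⁻¹ := (hρsq t ht).le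
    have h2 : ρ t = Real.sqrt (ρ t ^ 2) := (Real.sqrt_sq (hρpos t ht.le).le).symm
    have h3 := Real.sqrt_le_sqrt h1
    rwa [Real.sqrt_sq (hρpos t ht.le).le, Real.sqrt_inv, Real.sqrt_mul ha.le] at h3
  clear hρsq
  -- Step 4 : |u t - 2 a t| ≤ M √t on [1,∞)
  have hsa : 0 < Real.sqrt a := Real.sqrt_pos.2 ha
  set M : ℝ := u 1 + 2*a + 4*C₀/Real.sqrt a with hM
  have hu1 : 0 < u 1 := hupos 1 zero_le_one
  have hMpos : 0 < M := by
    have h4 : (0:ℝ) ≤ 4*C₀/Real.sqrt a := by positivity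
    rw [hM]; linarith
  have hIci : Set.Ici (1:ℝ) ⊆ Set.Ici (0:ℝ) := Set.Ici_subset_Ici.2 zero_le_one
  have hsqd : ∀ t ∈ Set.Ici (1:ℝ), HasDerivAt Real.sqrt (1/(2*Real.sqrt t)) t := by
    intro t ht
    exact Real.hasDerivAt_sqrt (by intro h; rw [h] at ht; exact absurd ht (by norm_num))
  have hlin : ∀ (c : ℝ) (t : ℝ), HasDerivWithinAt (fun x => c * x) c (Set.Ici (1:ℝ)) t := by
    intro c t
    simpa using ((hasDerivAt_id t).const_mul c).hasDerivWithinAt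
  have hderivbd : ∀ t ∈ Set.Ici (1:ℝ),
      |u' t - 2*a| ≤ 2*C₀ * (Real.sqrt a * Real.sqrt t)⁻¹ := by
    intro t ht
    have ht1 : (1:ℝ) ≤ t := ht
    refine le_trans (hub t (by linarith)) ?_
    exact mul_le_mul_of_nonneg_left (hρbd t (by linarith)) (by linarith)
  have hceq : ∀ t ∈ Set.Ici (1:ℝ),
      (4*C₀/Real.sqrt a) * (1/(2*Real.sqrt t)) = 2*C₀ * (Real.sqrt a * Real.sqrt t)⁻¹ := by
    intro t ht
    have hst : 0 < Real.sqrt t := Real.sqrt_pos.2 (by linarith [Set.mem_Ici.1 ht])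
    field_simp
    ring
  have hanti : AntitoneOn (fun t => u t - 2*a*t - (4*C₀/Real.sqrt a) * Real.sqrt t)
      (Set.Ici (1:ℝ)) := by
    apply anti_aux (f' := fun t => u' t - 2*a - (4*C₀/Real.sqrt a) * (1/(2*Real.sqrt t)))
    · intro t ht
      exact (((hud t (hIci ht)).mono hIci).sub (hlin (2*a) t)).sub
        (((hsqd t ht).const_mul _).hasDerivWithinAt)
    · intro t ht
      have h1 := (abs_le.1 (hderivbd t ht)).2
      rw [hceq t ht]
      linarith
  have hmono2 : MonotoneOn (fun t => u t - 2*a*t + (4*C₀/Real.sqrt a) * Real.sqrt t)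
      (Set.Ici (1:ℝ)) := by
    apply mono_aux (f' := fun t => u' t - 2*a + (4*C₀/Real.sqrt a) * (1/(2*Real.sqrt t)))
    · intro t ht
      exact (((hud t (hIci ht)).mono hIci).sub (hlin (2*a) t)).add
        (((hsqd t ht).const_mul _).hasDerivWithinAt)
    · intro t ht
      have h1 := (abs_le.1 (hderivbd t ht)).1
      rw [hceq t ht]
      linarith
  have habs : ∀ t : ℝ, 1 ≤ t → |u t - 2*a*t| ≤ M * Real.sqrt t := by
    intro t ht
    have hst1 : 1 ≤ Real.sqrt t := by
      rw [show (1:ℝ) = Real.sqrt 1 by simp]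
      exact Real.sqrt_le_sqrt ht
    have hp := hanti (Set.mem_Ici.2 le_rfl) (Set.mem_Ici.2 ht) ht
    have hq := hmono2 (Set.mem_Ici.2 le_rfl) (Set.mem_Ici.2 ht) ht
    simp only [Real.sqrt_one, mul_one] at hp hq
    have h4 : (0:ℝ) ≤ 4*C₀/Real.sqrt a := by positivity
    rw [abs_le]
    constructor
    · rw [hM]; nlinarith
    · rw [hM]; nlinarith
  -- Step 5 : |γ' t - (b/(2a)) t⁻¹| ≤ K₂ (t √t)⁻¹ on [1,∞)
  set K₂ : ℝ := |b| * M / (2*a^2) + C₀ / (a * Real.sqrt a) with hK₂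
  have hK₂0 : 0 ≤ K₂ := by positivity
  have hK : ∀ t : ℝ, 1 ≤ t → |γ' t - b/(2*a) * t⁻¹| ≤ K₂ * (t * Real.sqrt t)⁻¹ := by
    intro t ht
    have ht0 : (0:ℝ) < t := by linarith
    have hst : 0 < Real.sqrt t := Real.sqrt_pos.2 ht0
    have hss : Real.sqrt t * Real.sqrt t = t := Real.mul_self_sqrt ht0.le
    have haa : Real.sqrt a * Real.sqrt a = a := Real.mul_self_sqrt ha.le
    have hts : (0:ℝ) < t * Real.sqrt t := by positivity
    have hut : 0 < u t := hupos t ht0.le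
    have huat : a * t < u t := hua t ht0.le
    -- bound on C₀ ρ³
    have e2 : ρ t ^ 3 ≤ (a * Real.sqrt a)⁻¹ * (t * Real.sqrt t)⁻¹ := by
      have h5 : ρ t ^ 3 ≤ ((Real.sqrt a * Real.sqrt t)⁻¹) ^ 3 :=
        pow_le_pow_left₀ (hρpos t ht0.le).le (hρbd t ht0) 3
      have h6 : ((Real.sqrt a * Real.sqrt t)⁻¹) ^ 3
          = (a * Real.sqrt a)⁻¹ * (t * Real.sqrt t)⁻¹ := by
        rw [← mul_inv]
        congr 1
        rw [inv_pow]
        congr 1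
        linear_combination (Real.sqrt a * Real.sqrt t^3) * haa
          + (a * Real.sqrt a * Real.sqrt t) * hss
      rw [h6] at h5
      exact h5
    -- bound on the main term
    have e4 : |(u t)⁻¹ - (2*a*t)⁻¹| ≤ (M/(2*a^2)) * (t * Real.sqrt t)⁻¹ := by
      have hid : (u t)⁻¹ - (2*a*t)⁻¹ = (2*a*t - u t) / (u t * (2*a*t)) := by
        field_simp
      rw [hid, abs_div, abs_of_pos (by positivity : (0:ℝ) < u t * (2*a*t))]
      have hnum : |2*a*t - u t| ≤ M * Real.sqrt t := by
        rw [abs_sub_comm]; exact habs t ht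
      have hden : a*t * (2*a*t) ≤ u t * (2*a*t) :=
        mul_le_mul_of_nonneg_right huat.le (by positivity)
      calc |2*a*t - u t| / (u t * (2*a*t))
          ≤ (M * Real.sqrt t) / (a*t * (2*a*t)) :=
            div_le_div₀ (by positivity) hnum (by positivity) hden
        _ = (M/(2*a^2)) * (t * Real.sqrt t)⁻¹ := by
            field_simp
            linear_combination hss
    have hρu : ρ t ^ 2 = (u t)⁻¹ := (inv_inv (ρ t ^ 2)).symm
    have e3 : |b * ρ t ^ 2 - b/(2*a) * t⁻¹| ≤ (|b| * M/(2*a^2)) * (t * Real.sqrt t)⁻¹ := by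
      have hid2 : b * ρ t ^ 2 - b/(2*a) * t⁻¹ = b * ((u t)⁻¹ - (2*a*t)⁻¹) := by
        rw [hρu]
        field_simp
      rw [hid2, abs_mul]
      calc |b| * |(u t)⁻¹ - (2*a*t)⁻¹|
          ≤ |b| * ((M/(2*a^2)) * (t * Real.sqrt t)⁻¹) :=
            mul_le_mul_of_nonneg_left e4 (abs_nonneg b)
        _ = (|b| * M/(2*a^2)) * (t * Real.sqrt t)⁻¹ := by ring
    have e1 : |γ' t - b * ρ t ^ 2| ≤ C₀ / (a * Real.sqrt a) * (t * Real.sqrt t)⁻¹ := by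
      refine le_trans (hγest t ht0.le) ?_
      calc C₀ * ρ t ^ 3 ≤ C₀ * ((a * Real.sqrt a)⁻¹ * (t * Real.sqrt t)⁻¹) :=
            mul_le_mul_of_nonneg_left e2 hC₀
        _ = C₀ / (a * Real.sqrt a) * (t * Real.sqrt t)⁻¹ := by ring
    calc |γ' t - b/(2*a) * t⁻¹|
        = |(γ' t - b * ρ t ^ 2) + (b * ρ t ^ 2 - b/(2*a) * t⁻¹)| := by ring_nf
      _ ≤ |γ' t - b * ρ t ^ 2| + |b * ρ t ^ 2 - b/(2*a) * t⁻¹| := abs_add_le _ _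
      _ ≤ C₀ / (a * Real.sqrt a) * (t * Real.sqrt t)⁻¹
            + (|b| * M/(2*a^2)) * (t * Real.sqrt t)⁻¹ := add_le_add e1 e3
      _ = K₂ * (t * Real.sqrt t)⁻¹ := by rw [hK₂]; ring
  -- Step 6 : monotone bracketing functions
  set ψ : ℝ → ℝ := fun t => γ t - b/(2*a) * Real.log t + (2*K₂) * (Real.sqrt t)⁻¹ with hψ
  set χ : ℝ → ℝ := fun t => γ t - b/(2*a) * Real.log t - (2*K₂) * (Real.sqrt t)⁻¹ with hχ
  have hlogd : ∀ t ∈ Set.Ici (1:ℝ),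
      HasDerivWithinAt (fun x => b/(2*a) * Real.log x) (b/(2*a) * t⁻¹) (Set.Ici 1) t := by
    intro t ht
    have ht0 : t ≠ 0 := by intro h; rw [h] at ht; exact absurd ht (by norm_num)
    exact ((Real.hasDerivAt_log ht0).const_mul (b/(2*a))).hasDerivWithinAt
  have hinvd : ∀ t ∈ Set.Ici (1:ℝ),
      HasDerivWithinAt (fun x => (2*K₂) * (Real.sqrt x)⁻¹)
        (-(K₂ * (t * Real.sqrt t)⁻¹)) (Set.Ici 1) t := by
    intro t ht
    have ht1 : (1:ℝ) ≤ t := ht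
    have ht0 : (0:ℝ) < t := by linarith
    have hst : 0 < Real.sqrt t := Real.sqrt_pos.2 ht0
    have hss : Real.sqrt t * Real.sqrt t = t := Real.mul_self_sqrt ht0.le
    have h : HasDerivWithinAt (fun x => (2*K₂) * (Real.sqrt x)⁻¹)
        (2*K₂ * (-(1/(2*Real.sqrt t)) / Real.sqrt t ^ 2)) (Set.Ici 1) t :=
      (((hsqd t ht).inv hst.ne').const_mul (2*K₂)).hasDerivWithinAt
    convert h using 1
    field_simp
    ring_nf
    rw [sq, hss]
  have hγd1 : ∀ t ∈ Set.Ici (1:ℝ), HasDerivWithinAt γ (γ' t) (Set.Ici (1:ℝ)) t :=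
    fun t ht => (hγd t (hIci ht)).mono hIci
  have hψanti : AntitoneOn ψ (Set.Ici (1:ℝ)) := by
    apply anti_aux (f' := fun t => γ' t - b/(2*a) * t⁻¹ + -(K₂ * (t * Real.sqrt t)⁻¹))
    · intro t ht
      exact ((hγd1 t ht).sub (hlogd t ht)).add (hinvd t ht)
    · intro t ht
      have h1 := (abs_le.1 (hK t ht)).2
      linarith
  have hχmono : MonotoneOn χ (Set.Ici (1:ℝ)) := by
    apply mono_aux (f' := fun t => γ' t - b/(2*a) * t⁻¹ - -(K₂ * (t * Real.sqrt t)⁻¹))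
    · intro t ht
      exact ((hγd1 t ht).sub (hlogd t ht)).sub (hinvd t ht)
    · intro t ht
      have h1 := (abs_le.1 (hK t ht)).1
      linarith
  -- Step 7 : conclusion
  have hχψ : ∀ t : ℝ, 1 ≤ t → χ t ≤ ψ t := by
    intro t ht
    have hst : 0 < Real.sqrt t := Real.sqrt_pos.2 (by linarith)
    have : 0 ≤ (2*K₂) * (Real.sqrt t)⁻¹ := by positivity
    simp only [hψ, hχ]
    linarith
  have hbdd : BddBelow (ψ '' Set.Ici (1:ℝ)) := by
    refine ⟨χ 1, ?_⟩
    rintro y ⟨s, hs, rfl⟩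
    exact le_trans (hχmono (Set.mem_Ici.2 le_rfl) hs hs) (hχψ s hs)
  have hne : (ψ '' Set.Ici (1:ℝ)).Nonempty := ⟨ψ 1, 1, Set.mem_Ici.2 le_rfl, rfl⟩
  set L : ℝ := sInf (ψ '' Set.Ici (1:ℝ)) with hL
  refine ⟨L, 2*K₂ + 1, by linarith, ?_⟩
  intro t ht
  have hst : 0 < Real.sqrt t := Real.sqrt_pos.2 (by linarith)
  have hL1 : L ≤ ψ t := csInf_le hbdd ⟨t, Set.mem_Ici.2 ht, rfl⟩
  have hL2 : χ t ≤ L := by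
    apply le_csInf hne
    rintro y ⟨s, hs, rfl⟩
    have hs1 : (1:ℝ) ≤ s := hs
    rcases le_total s t with hst' | hst'
    · exact le_trans (le_trans (hχψ t ht) (hψanti hs (Set.mem_Ici.2 ht) hst')) le_rfl
    · exact le_trans (hχmono (Set.mem_Ici.2 ht) hs hst') (hχψ s hs1)
  have hfin : |γ t - b/(2*a) * Real.log t - L| ≤ (2*K₂) * (Real.sqrt t)⁻¹ := by
    rw [abs_le]
    constructor
    · simp only [hψ] at hL1; linarith
    · simp only [hχ] at hL2; linarith
  calc |γ t - b/(2*a) * Real.log t - L| ≤ (2*K₂) * (Real.sqrt t)⁻¹ := hfin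
    _ = (2*K₂) / Real.sqrt t := by rw [div_eq_mul_inv]
    _ ≤ (2*K₂+1) / Real.sqrt t := by gcongr <;> linarith
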